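/- Let U be a real Hilbert space, G : U → (−∞,∞] proper, convex and lower semicontinuous, and F : U → ℝ Fréchet differentiable with ∇F Lipschitz continuous with constant L_{∇F} > 0. For v ∈ dom(G), Δ > 0, let v̂ := T(v,Δ) := prox_{ΔG}(v − Δ∇F(v)), pred(v,Δ) := ⟨∇F(v), v − v̂⟩ + G(v) − G(v̂) − (1/(2Δ))‖v̂ − v‖², and ared(v,Δ) := (F+G)(v) − (F+G)(v̂). Then for every η ∈ (0,1], every v ∈ dom(G) and every Δ ∈ (0, 1/L_{∇F}]: ared(v,Δ) ≥ η·pred(v,Δ); in particular every trust-region iteration with sufficiently small radius is successful. -/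

import Mathlib

open scoped RealInnerProductSpace

/-- Descent lemma for Lipschitz-gradient functions. -/
lemma descent_lemma
    {U : Type*} [NormedAddCommGroup U] [InnerProductSpace ℝ U] [CompleteSpace U]
    (F : U → ℝ) (gradF : U → U) (hF : ∀ v : U, HasGradientAt F (gradF v) v)
    (L : ℝ)
    (hlip : ∀ v w : U, ‖gradF v - gradF w‖ ≤ L * ‖v - w‖)
    (v w : U) :
    F w ≤ F v + ⟪gradF v, w - v⟫ + L / 2 * ‖w - v‖ ^ 2 := by
  set d := w - v with hd
  set φ : ℝ → ℝ := fun t => F (v + t • d) - t * ⟪gradF v, d⟫ - L / 2 * t ^ 2 * ‖d‖ ^ 2 with hφ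
  have hderiv : ∀ t : ℝ, HasDerivAt φ
      (⟪gradF (v + t • d), d⟫ - ⟪gradF v, d⟫ - L * t * ‖d‖ ^ 2) t := by
    intro t
    have hline : HasDerivAt (fun t : ℝ => v + t • d) d t := by
      simpa using ((hasDerivAt_id t).smul_const d).const_add v
    have h1 : HasDerivAt (fun t : ℝ => F (v + t • d)) ⟪gradF (v + t • d), d⟫ t := by
      have := ((hF (v + t • d)).hasFDerivAt).comp_hasDerivAt t hline
      simpa [InnerProductSpace.toDual_apply_apply, Function.comp_def] using this
    have h2 : HasDerivAt (fun t : ℝ => t * ⟪gradF v, d⟫) ⟪gradF v, d⟫ t := by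
      simpa using (hasDerivAt_id t).mul_const (⟪gradF v, d⟫)
    have h3 : HasDerivAt (fun t : ℝ => L / 2 * t ^ 2 * ‖d‖ ^ 2) (L * t * ‖d‖ ^ 2) t := by
      have := ((hasDerivAt_pow 2 t).const_mul (L / 2)).mul_const (‖d‖ ^ 2)
      refine this.congr_deriv ?_
      ring
    exact (h1.sub h2).sub h3
  have hanti : AntitoneOn φ (Set.Icc 0 1) := by
    apply antitoneOn_of_deriv_nonpos (convex_Icc 0 1)
    · exact fun t _ => ((hderiv t).continuousAt).continuousWithinAt
    · exact fun t _ => ((hderiv t).differentiableAt).differentiableWithinAt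
    · intro t ht
      rw [interior_Icc] at ht
      rw [(hderiv t).deriv]
      have h1 : ⟪gradF (v + t • d) - gradF v, d⟫ ≤ L * t * ‖d‖ ^ 2 := by
        calc ⟪gradF (v + t • d) - gradF v, d⟫ ≤ ‖gradF (v + t • d) - gradF v‖ * ‖d‖ :=
              real_inner_le_norm _ _
          _ ≤ L * ‖(v + t • d) - v‖ * ‖d‖ :=
              mul_le_mul_of_nonneg_right (hlip _ _) (norm_nonneg d)
          _ = L * t * ‖d‖ ^ 2 := by
              rw [add_sub_cancel_left, norm_smul, Real.norm_eq_abs,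
                abs_of_pos ht.1]; ring
      have := inner_sub_left (𝕜 := ℝ) (gradF (v + t • d)) (gradF v) d
      linarith [h1, this.symm.le, this.le]
  have := hanti (Set.mem_Icc.2 ⟨le_refl 0, zero_le_one⟩) (Set.mem_Icc.2 ⟨zero_le_one, le_refl 1⟩) zero_le_one
  simp only [hφ] at this
  norm_num at this
  have hvd : v + d = w := by rw [hd]; abel
  rw [hvd] at this
  linarith

/-- Remark 3.10 / `rem:accuracy`: every proximal gradient trust-region iteration with
radius `Δ ≤ 1/L_{∇F}` is successful, i.e. `ared(v,Δ) ≥ η pred(v,Δ)`. -/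
theorem prox_grad_small_radius_successful
    {U : Type*} [NormedAddCommGroup U] [InnerProductSpace ℝ U] [CompleteSpace U]
    (G : U → EReal)
    -- `G` is proper
    (hGbot : ∀ v : U, G v ≠ ⊥) (hGtop : ∃ v : U, G v ≠ ⊤)
    -- `G` is convex
    (hGconv : ∀ v w : U, ∀ t : ℝ, 0 ≤ t → t ≤ 1 →
      G (t • v + (1 - t) • w) ≤ (t : EReal) * G v + ((1 - t : ℝ) : EReal) * G w)
    -- `G` is lower semicontinuous
    (hGlsc : LowerSemicontinuous G)
    -- `F` is Fréchet differentiable with gradient `gradF`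
    (F : U → ℝ) (gradF : U → U) (hF : ∀ v : U, HasGradientAt F (gradF v) v)
    -- `∇F` is Lipschitz with constant `LgradF > 0`
    (LgradF : ℝ) (hLgradF : 0 < LgradF)
    (hgradlip : ∀ v w : U, ‖gradF v - gradF w‖ ≤ LgradF * ‖v - w‖)
    -- `prox r v` is the (unique) minimizer of `w ↦ G w + ‖w - v‖² / (2 r)`
    (prox : ℝ → U → U)
    (hprox : ∀ r : ℝ, 0 < r → ∀ v w : U,
      G (prox r v) + ((‖prox r v - v‖ ^ 2 / (2 * r) : ℝ) : EReal) ≤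
        G w + ((‖w - v‖ ^ 2 / (2 * r) : ℝ) : EReal)) :
    ∀ η : ℝ, 0 < η → η ≤ 1 → ∀ v : U, G v ≠ ⊤ → ∀ Δ : ℝ, 0 < Δ → Δ ≤ 1 / LgradF →
      η * (⟪gradF v, v - prox Δ (v - Δ • gradF v)⟫ +
          (G v).toReal - (G (prox Δ (v - Δ • gradF v))).toReal -
          1 / (2 * Δ) * ‖prox Δ (v - Δ • gradF v) - v‖ ^ 2) ≤
        (F v + (G v).toReal) -
          (F (prox Δ (v - Δ • gradF v)) + (G (prox Δ (v - Δ • gradF v))).toReal) := by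
  intro η hη hη1 v hvt Δ hΔ hΔL
  set g := gradF v with hg
  set p := v - Δ • g with hp
  set vh := prox Δ p with hvh
  set d := vh - v with hd
  set b := (G v).toReal with hb
  have hGv : G v = (b : EReal) := (EReal.coe_toReal hvt (hGbot v)).symm
  have hkey := hprox Δ hΔ p v
  -- G vh is finite
  have hvht : G vh ≠ ⊤ := by
    intro h
    rw [← hvh, h, EReal.top_add_of_ne_bot (by simp), top_le_iff, hGv,
      ← EReal.coe_add] at hkey
    exact EReal.coe_ne_top _ hkey
  set a := (G vh).toReal with ha
  have hGvh : G vh = (a : EReal) := (EReal.coe_toReal hvht (hGbot vh)).symm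
  -- real version of the prox inequality
  have hkeyR : a + ‖vh - p‖ ^ 2 / (2 * Δ) ≤ b + ‖v - p‖ ^ 2 / (2 * Δ) := by
    rw [← hvh, hGvh, hGv, ← EReal.coe_add, ← EReal.coe_add, EReal.coe_le_coe_iff] at hkey
    exact hkey
  -- norm expansions
  have hvp : v - p = Δ • g := by rw [hp]; abel
  have hvhp : vh - p = d + Δ • g := by rw [hp, hd]; abel
  have e1 : ‖v - p‖ ^ 2 = Δ ^ 2 * ‖g‖ ^ 2 := by
    rw [hvp, norm_smul, Real.norm_eq_abs, abs_of_pos hΔ, mul_pow]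
  have e2 : ‖vh - p‖ ^ 2 = ‖d‖ ^ 2 + 2 * (Δ * ⟪d, g⟫) + Δ ^ 2 * ‖g‖ ^ 2 := by
    rw [hvhp, norm_add_sq_real, real_inner_smul_right, norm_smul, Real.norm_eq_abs,
      abs_of_pos hΔ, mul_pow]
  have hsym : ⟪d, g⟫ = ⟪g, d⟫ := real_inner_comm g d
  -- key real inequality: a ≤ b - ⟪g, d⟫ - ‖d‖²/(2Δ)
  have hK : a ≤ b - ⟪g, d⟫ - ‖d‖ ^ 2 / (2 * Δ) := by
    rw [e1, e2] at hkeyR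
    have h2Δ : (0:ℝ) < 2 * Δ := by linarith
    have hex : (‖d‖ ^ 2 + 2 * (Δ * ⟪d, g⟫) + Δ ^ 2 * ‖g‖ ^ 2) / (2 * Δ) =
        ‖d‖ ^ 2 / (2 * Δ) + ⟪d, g⟫ + Δ ^ 2 * ‖g‖ ^ 2 / (2 * Δ) := by
      field_simp
    rw [hex] at hkeyR
    linarith [hsym.le, hsym.ge]
  -- descent lemma
  have hdesc : F vh ≤ F v + ⟪g, d⟫ + LgradF / 2 * ‖d‖ ^ 2 := by
    have := descent_lemma F gradF hF LgradF hgradlip v vh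
    rw [← hd, ← hg] at this
    exact this
  -- inner product flip
  have hflip : ⟪g, v - vh⟫ = -⟪g, d⟫ := by
    have : v - vh = -d := by rw [hd]; abel
    rw [this, inner_neg_right]
  -- Δ ≤ 1/L gives L ≤ 1/Δ
  have hLΔ : LgradF * Δ ≤ 1 := by
    rw [le_div_iff₀ hLgradF] at hΔL; linarith [hΔL]
  have hdnn : (0:ℝ) ≤ ‖d‖ ^ 2 := sq_nonneg _
  -- pred ≥ 0
  have hpred : 0 ≤ ⟪g, v - vh⟫ + b - a - 1 / (2 * Δ) * ‖d‖ ^ 2 := by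
    rw [hflip]
    have : 1 / (2 * Δ) * ‖d‖ ^ 2 = ‖d‖ ^ 2 / (2 * Δ) := by ring
    linarith [hK, this.le, this.ge]
  -- ared ≥ pred
  have hared : ⟪g, v - vh⟫ + b - a - 1 / (2 * Δ) * ‖d‖ ^ 2 ≤
      (F v + b) - (F vh + a) := by
    rw [hflip]
    have h1 : 1 / (2 * Δ) * ‖d‖ ^ 2 ≥ LgradF / 2 * ‖d‖ ^ 2 := by
      apply mul_le_mul_of_nonneg_right _ hdnn
      rw [div_le_div_iff₀ (by norm_num) (by linarith)]
      nlinarith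
    linarith [hdesc]
  calc η * (⟪g, v - vh⟫ + b - a - 1 / (2 * Δ) * ‖d‖ ^ 2)
      ≤ 1 * (⟪g, v - vh⟫ + b - a - 1 / (2 * Δ) * ‖d‖ ^ 2) :=
        mul_le_mul_of_nonneg_right hη1 hpred
    _ ≤ (F v + b) - (F vh + a) := by rw [one_mul]; exact hared
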